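/- For γ ∈ ℂ with 1 ≤ Re(γ) < 2, the function g(x) := x^γ − (k^γ + (γ/2) k^{γ−1}), where k = ⌊x⌋, satisfies P[g](x) → 0 as x → ∞; that is, x^γ is strongly Cesàro-asymptotic to k^γ + (γ/2)k^{γ−1}. -/

import Mathlib

open Filter intervalIntegral

open MeasureTheory Set Topology

lemma hasDerivAt_cpow_real {γ : ℂ} (hγ : γ ≠ 0) {t : ℝ} (ht : 0 < t) :
    HasDerivAt (fun y : ℝ => (y : ℂ) ^ γ) (γ * (t:ℂ) ^ (γ - 1)) t := by
  have hne : γ - 1 ≠ -1 := by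
    intro h
    apply hγ
    have := congrArg (· + 1) h
    simpa using this
  have h := (hasDerivAt_ofReal_cpow_const' (ne_of_gt ht) hne).const_mul γ
  rw [sub_add_cancel] at h
  have heq : (fun y : ℝ => γ * ((y:ℂ)^γ / γ)) = fun y : ℝ => (y:ℂ)^γ := by
    funext y; field_simp
  rwa [heq] at h

lemma norm_cpow_real {t : ℝ} (ht : 0 < t) (s : ℂ) : ‖(t:ℂ)^s‖ = t ^ s.re := by
  rw [Complex.norm_cpow_eq_rpow_re_of_pos ht]

lemma measurable_cpow_const (s : ℂ) : Measurable (fun z : ℂ => z ^ s) := by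
  simp only [Complex.cpow_def]
  exact Measurable.ite (measurableSet_eq) measurable_const
    (Complex.measurable_exp.comp (Complex.measurable_log.mul measurable_const))

lemma measurable_floor_real_complex : Measurable (fun t : ℝ => ((⌊t⌋ : ℝ) : ℂ)) :=
  Complex.measurable_ofReal.comp ((measurable_from_top).comp Int.measurable_floor)

lemma mvt1 {γ : ℂ} (h1 : 1 ≤ γ.re) {a t : ℝ} (ha : 1 ≤ a) (hat : a ≤ t) :
    ‖(t:ℂ)^γ - (a:ℂ)^γ‖ ≤ ‖γ‖ * t ^ (γ.re - 1) * (t - a) := by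
  have hγ : γ ≠ 0 := by
    intro h; rw [h] at h1; simp at h1; linarith
  have key := norm_image_sub_le_of_norm_deriv_le_segment'
    (f := fun y : ℝ => (y:ℂ)^γ) (f' := fun y : ℝ => γ * (y:ℂ)^(γ-1))
    (C := ‖γ‖ * t ^ (γ.re - 1)) (a := a) (b := t)
    (fun x hx => (hasDerivAt_cpow_real hγ (by linarith [hx.1] : (0:ℝ) < x)).hasDerivWithinAt)
    ?_ t (right_mem_Icc.2 hat)
  · exact key
  · intro x hx
    have hx0 : (0:ℝ) < x := by linarith [hx.1]
    rw [norm_mul, norm_cpow_real hx0]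
    have : ((γ - 1).re) = γ.re - 1 := by simp
    rw [this]
    exact mul_le_mul_of_nonneg_left
      (Real.rpow_le_rpow hx0.le hx.2.le (by linarith)) (norm_nonneg γ)

lemma mvt2 {γ : ℂ} (h1 : 1 ≤ γ.re) (h2 : γ.re < 2) {k s : ℝ} (hk : 1 ≤ k) (hks : k ≤ s) :
    ‖(s:ℂ)^(γ-1) - (k:ℂ)^(γ-1)‖ ≤ ‖γ - 1‖ * k ^ (γ.re - 2) * (s - k) := by
  by_cases hγ1 : γ = 1
  · simp [hγ1]
  · have hγ1' : γ - 1 ≠ 0 := sub_ne_zero.mpr hγ1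
    have key := norm_image_sub_le_of_norm_deriv_le_segment'
      (f := fun y : ℝ => (y:ℂ)^(γ-1)) (f' := fun y : ℝ => (γ-1) * (y:ℂ)^(γ-2))
      (C := ‖γ - 1‖ * k ^ (γ.re - 2)) (a := k) (b := s)
      ?_ ?_ s (right_mem_Icc.2 hks)
    · exact key
    · intro x hx
      have := hasDerivAt_cpow_real hγ1' (by linarith [hx.1] : (0:ℝ) < x)
      have h21 : γ - 1 - 1 = γ - 2 := by ring
      rw [h21] at this
      exact this.hasDerivWithinAt
    · intro x hx
      have hx0 : (0:ℝ) < x := by linarith [hx.1]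
      rw [norm_mul, norm_cpow_real hx0]
      have : ((γ - 2).re) = γ.re - 2 := by simp
      rw [this]
      gcongr ?_ * ?_
      · exact Real.rpow_le_rpow_of_nonpos (by linarith) hx.1 (by linarith)

lemma mvt3 {γ : ℂ} (h1 : 1 ≤ γ.re) (h2 : γ.re < 2) {k t : ℝ} (hk : 1 ≤ k)
    (ht : t ∈ Icc k (k+1)) :
    ‖(t:ℂ)^γ - (k:ℂ)^γ - γ*(k:ℂ)^(γ-1)*((t:ℂ)-(k:ℂ))‖ ≤ ‖γ‖*(‖γ-1‖*k^(γ.re-2)) := by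
  have hγ : γ ≠ 0 := by
    intro h; rw [h] at h1; simp at h1; linarith
  have key := norm_image_sub_le_of_norm_deriv_le_segment'
    (f := fun y : ℝ => (y:ℂ)^γ - γ*(k:ℂ)^(γ-1)*(y:ℂ))
    (f' := fun y : ℝ => γ * (y:ℂ)^(γ-1) - γ*(k:ℂ)^(γ-1))
    (C := ‖γ‖*(‖γ-1‖*k^(γ.re-2))) (a := k) (b := k+1)
    ?_ ?_ t ht
  · calc ‖(t:ℂ)^γ - (k:ℂ)^γ - γ*(k:ℂ)^(γ-1)*((t:ℂ)-(k:ℂ))‖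
        = ‖((t:ℂ)^γ - γ*(k:ℂ)^(γ-1)*(t:ℂ)) - ((k:ℂ)^γ - γ*(k:ℂ)^(γ-1)*(k:ℂ))‖ := by
          ring_nf
      _ ≤ ‖γ‖*(‖γ-1‖*k^(γ.re-2)) * (t - k) := key
      _ ≤ ‖γ‖*(‖γ-1‖*k^(γ.re-2)) * 1 := by
          have h0 : (0:ℝ) ≤ ‖γ‖*(‖γ-1‖*k^(γ.re-2)) := by positivity
          have := ht.2
          nlinarith [ht.1]
      _ = ‖γ‖*(‖γ-1‖*k^(γ.re-2)) := mul_one _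
  · intro x hx
    have hx0 : (0:ℝ) < x := by linarith [hx.1]
    have hcoe : HasDerivAt (fun y : ℝ => (y:ℂ)) 1 x := by
      exact Complex.ofRealCLM.hasDerivAt (x := x)
    have hd := (hasDerivAt_cpow_real hγ hx0).sub (hcoe.const_mul (γ*(k:ℂ)^(γ-1)))
    rw [mul_one] at hd
    exact hd.hasDerivWithinAt
  · intro x hx
    have hx0 : (0:ℝ) < x := by linarith [hx.1]
    show ‖γ * (x:ℂ)^(γ-1) - γ*(k:ℂ)^(γ-1)‖ ≤ _
    have heq : γ * (x:ℂ)^(γ-1) - γ*(k:ℂ)^(γ-1) = γ * ((x:ℂ)^(γ-1) - (k:ℂ)^(γ-1)) := by ring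
    rw [heq, norm_mul]
    gcongr ?_ * ?_
    · calc ‖(x:ℂ)^(γ-1) - (k:ℂ)^(γ-1)‖ ≤ ‖γ-1‖ * k^(γ.re-2) * (x - k) :=
            mvt2 h1 h2 hk hx.1
        _ ≤ ‖γ-1‖ * k^(γ.re-2) * 1 := by
            have h0 : (0:ℝ) ≤ ‖γ-1‖ * k^(γ.re-2) := by positivity
            have := hx.2
            nlinarith
        _ = ‖γ-1‖ * k^(γ.re-2) := mul_one _

lemma cpow_norm_le {s : ℂ} (hs : 0 ≤ s.re) {u c : ℝ} (hu : 0 ≤ u) (huc : u ≤ c) :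
    ‖(u:ℂ)^s‖ ≤ max 1 (c ^ s.re) := by
  rcases eq_or_lt_of_le hu with h0 | h0
  · rw [← h0]
    rcases eq_or_ne s 0 with rfl | hs0
    · simp
    · push_cast
      rw [Complex.zero_cpow hs0]
      simp
  · rw [norm_cpow_real h0]
    rcases le_total u 1 with h | h
    · exact le_max_of_le_left (Real.rpow_le_one hu h hs)
    · exact le_max_of_le_right (Real.rpow_le_rpow hu huc hs)

lemma measurable_g (γ : ℂ) :
    Measurable (fun t : ℝ =>
      (t : ℂ) ^ γ - (((⌊t⌋ : ℝ) : ℂ) ^ γ + (γ / 2) * ((⌊t⌋ : ℝ) : ℂ) ^ (γ - 1))) := by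
  have hf := measurable_floor_real_complex
  exact ((measurable_cpow_const γ).comp Complex.measurable_ofReal).sub
    (((measurable_cpow_const γ).comp hf).add
      ((((measurable_cpow_const (γ-1)).comp hf)).const_mul (γ/2)))

lemma g_intInt (γ : ℂ) (h1 : 1 ≤ γ.re) {a b : ℝ} (ha : 0 ≤ a) (hab : a ≤ b) :
    IntervalIntegrable (fun t : ℝ =>
      (t : ℂ) ^ γ - (((⌊t⌋ : ℝ) : ℂ) ^ γ + (γ / 2) * ((⌊t⌋ : ℝ) : ℂ) ^ (γ - 1)))
      volume a b := by
  rw [intervalIntegrable_iff_integrableOn_Ioc_of_le hab]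
  apply Measure.integrableOn_of_bounded
    (M := max 1 (b^γ.re) + (max 1 (b^γ.re) + ‖γ/2‖ * max 1 (b^(γ.re - 1))))
  · exact measure_Ioc_lt_top.ne
  · exact (measurable_g γ).aestronglyMeasurable
  · apply (ae_restrict_iff' measurableSet_Ioc).mpr
    apply ae_of_all
    intro t ht
    have ht0 : 0 < t := lt_of_le_of_lt ha ht.1
    have hfl0 : (0:ℝ) ≤ (⌊t⌋ : ℝ) := by
      exact_mod_cast Int.floor_nonneg.mpr ht0.le
    have hflb : ((⌊t⌋ : ℝ)) ≤ b := le_trans (Int.floor_le t) ht.2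
    have hre1 : ((γ - 1).re) = γ.re - 1 := by simp
    calc ‖(t : ℂ) ^ γ - (((⌊t⌋ : ℝ) : ℂ) ^ γ + (γ / 2) * ((⌊t⌋ : ℝ) : ℂ) ^ (γ - 1))‖
        ≤ ‖(t : ℂ) ^ γ‖ + (‖((⌊t⌋ : ℝ) : ℂ) ^ γ‖ + ‖γ/2‖ * ‖((⌊t⌋ : ℝ) : ℂ) ^ (γ - 1)‖) := by
          refine (norm_sub_le _ _).trans ?_
          gcongr
          refine (norm_add_le _ _).trans ?_
          gcongr
          rw [norm_mul]
      _ ≤ max 1 (b^γ.re) + (max 1 (b^γ.re) + ‖γ/2‖ * max 1 (b^(γ.re - 1))) := by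
          gcongr
          · exact cpow_norm_le (by linarith) ht0.le ht.2
          · exact cpow_norm_le (by linarith) hfl0 hflb
          · rw [← hre1]
            exact cpow_norm_le (by rw [hre1]; linarith) hfl0 hflb

lemma Ak_bound (γ : ℂ) (h1 : 1 ≤ γ.re) (h2 : γ.re < 2) (k : ℕ) (hk : 1 ≤ k) :
    ‖∫ t in ((k:ℝ))..((k:ℝ)+1), ((t : ℂ) ^ γ -
        (((⌊t⌋ : ℝ) : ℂ) ^ γ + (γ / 2) * ((⌊t⌋ : ℝ) : ℂ) ^ (γ - 1)))‖
      ≤ ‖γ‖ * (‖γ - 1‖ * (k:ℝ) ^ (γ.re - 2)) := by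
  have hγ : γ ≠ 0 := by
    intro h; rw [h] at h1; simp at h1; linarith
  have hkr : (1:ℝ) ≤ (k:ℝ) := by exact_mod_cast hk
  set c : ℂ := ((k:ℝ) : ℂ) with hc
  set φ : ℝ → ℂ := fun t => (t:ℂ)^γ - c^γ - γ*c^(γ-1)*((t:ℂ) - c) with hφ
  set ψ : ℝ → ℂ := fun t => γ*c^(γ-1)*((t:ℂ) - c - 1/2) with hψ
  have hle : (k:ℝ) ≤ (k:ℝ)+1 := by linarith
  have hcong : (∫ t in ((k:ℝ))..((k:ℝ)+1), ((t : ℂ) ^ γ -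
        (((⌊t⌋ : ℝ) : ℂ) ^ γ + (γ / 2) * ((⌊t⌋ : ℝ) : ℂ) ^ (γ - 1))))
      = ∫ t in ((k:ℝ))..((k:ℝ)+1), (φ t + ψ t) := by
    apply intervalIntegral.integral_congr_ae
    filter_upwards [compl_mem_ae_iff.mpr (measure_singleton ((k:ℝ)+1))] with t htne htmem
    simp only [Set.mem_compl_iff, Set.mem_singleton_iff] at htne
    rw [Set.uIoc_of_le hle] at htmem
    have hfl : ⌊t⌋ = (k:ℤ) := by
      rw [Int.floor_eq_iff]
      constructor
      · push_cast; linarith [htmem.1]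
      · push_cast; exact lt_of_le_of_ne htmem.2 htne
    rw [hfl]
    simp only [hφ, hψ, hc]
    push_cast
    ring
  have hφcont : ContinuousOn φ (Set.uIcc ((k:ℝ)) ((k:ℝ)+1)) := by
    rw [Set.uIcc_of_le hle]
    apply ContinuousOn.sub
    apply ContinuousOn.sub
    · intro x hx
      exact ((hasDerivAt_cpow_real hγ (by linarith [hx.1] : (0:ℝ) < x)).continuousAt).continuousWithinAt
    · exact continuousOn_const
    · exact (continuous_const.mul (Complex.continuous_ofReal.sub continuous_const)).continuousOn
  have hφint : IntervalIntegrable φ volume ((k:ℝ)) ((k:ℝ)+1) := hφcont.intervalIntegrable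
  have hψint : IntervalIntegrable ψ volume ((k:ℝ)) ((k:ℝ)+1) :=
    (continuous_const.mul ((Complex.continuous_ofReal.sub continuous_const).sub
      continuous_const)).intervalIntegrable _ _
  have hψ0 : (∫ t in ((k:ℝ))..((k:ℝ)+1), ψ t) = 0 := by
    have heq : ∀ t : ℝ, ψ t = γ*c^(γ-1) * (((t - ((k:ℝ) + 1/2) : ℝ)) : ℂ) := by
      intro t; simp only [hψ, hc]; push_cast; ring
    simp only [heq]
    rw [intervalIntegral.integral_const_mul, intervalIntegral.integral_ofReal]
    rw [intervalIntegral.integral_sub intervalIntegrable_id (intervalIntegrable_const),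
      integral_id, intervalIntegral.integral_const]
    have : (((k:ℝ)+1)^2 - (k:ℝ)^2)/2 - ((k:ℝ)+1 - (k:ℝ)) • ((k:ℝ) + 1/2) = 0 := by
      simp [smul_eq_mul]; ring
    rw [this]
    simp
  rw [hcong, intervalIntegral.integral_add hφint hψint, hψ0, add_zero]
  have hb := intervalIntegral.norm_integral_le_of_norm_le_const
    (C := ‖γ‖ * (‖γ - 1‖ * (k:ℝ) ^ (γ.re - 2))) (f := φ) (a := (k:ℝ)) (b := (k:ℝ)+1) ?_
  · calc ‖∫ t in ((k:ℝ))..((k:ℝ)+1), φ t‖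
        ≤ ‖γ‖ * (‖γ - 1‖ * (k:ℝ) ^ (γ.re - 2)) * |(k:ℝ)+1 - (k:ℝ)| := hb
      _ = ‖γ‖ * (‖γ - 1‖ * (k:ℝ) ^ (γ.re - 2)) := by simp
  · intro x hx
    rw [Set.uIoc_of_le hle] at hx
    exact mvt3 h1 h2 hkr ⟨le_of_lt hx.1, hx.2⟩

/-- The continuous Cesàro operator. -/
noncomputable def cesaroP (f : ℝ → ℂ) : ℝ → ℂ :=
  fun x => (1 / (x : ℂ)) * ∫ t in (0 : ℝ)..x, f t

/-- For `1 ≤ Re γ < 2`, with `k = ⌊x⌋`, the function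
`g(x) = x^γ - (k^γ + (γ/2) k^(γ-1))` satisfies `P[g](x) → 0` as `x → ∞`:
`x^γ` is strongly Cesàro-asymptotic to `k^γ + (γ/2)k^(γ-1)`. -/
theorem strong_cesaro_asymptotic_pow (γ : ℂ) (h1 : 1 ≤ γ.re) (h2 : γ.re < 2) :
    Tendsto
      (cesaroP (fun x : ℝ =>
        (x : ℂ) ^ γ - (((⌊x⌋ : ℝ) : ℂ) ^ γ + (γ / 2) * ((⌊x⌋ : ℝ) : ℂ) ^ (γ - 1))))
      atTop (nhds 0) := by
  set g : ℝ → ℂ := fun x : ℝ =>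
    (x : ℂ) ^ γ - (((⌊x⌋ : ℝ) : ℂ) ^ γ + (γ / 2) * ((⌊x⌋ : ℝ) : ℂ) ^ (γ - 1)) with hg
  set A : ℕ → ℂ := fun k => ∫ t in ((k:ℝ))..((k:ℝ)+1), g t with hA
  have hγ : γ ≠ 0 := by
    intro h; rw [h] at h1; simp at h1; linarith
  have hrpow : Tendsto (fun x : ℝ => x ^ (γ.re - 2)) atTop (𝓝 0) := by
    have h := tendsto_rpow_neg_atTop (y := 2 - γ.re) (by linarith)
    have heq : (fun x : ℝ => x ^ (γ.re - 2)) = fun x : ℝ => x ^ (-(2 - γ.re)) := by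
      funext x; congr 1; ring
    rw [heq]; exact h
  -- A tends to 0
  have hAlim : Tendsto A atTop (𝓝 0) := by
    apply squeeze_zero_norm' (a := fun k : ℕ => ‖γ‖ * (‖γ - 1‖ * (k:ℝ) ^ (γ.re - 2)))
    · filter_upwards [eventually_ge_atTop 1] with k hk
      exact Ak_bound γ h1 h2 k hk
    · have h := ((hrpow.comp tendsto_natCast_atTop_atTop).const_mul ‖γ - 1‖).const_mul ‖γ‖
      simpa using h
  -- partial sums are integrals
  have hS : ∀ n : ℕ, (∑ i ∈ Finset.range n, A i) = ∫ t in (0:ℝ)..((n:ℝ)), g t := by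
    intro n
    have h := intervalIntegral.sum_integral_adjacent_intervals
      (a := fun i : ℕ => (i:ℝ)) (μ := volume) (f := g) (n := n)
      (fun i _ => g_intInt γ h1 (by positivity) (by push_cast; linarith))
    beta_reduce at h
    push_cast at h
    exact h
  have hces : Tendsto (fun n : ℕ => ((n:ℝ)⁻¹ : ℝ) • ∑ i ∈ Finset.range n, A i)
      atTop (𝓝 0) := hAlim.cesaro_smul
  have hfloor : Tendsto (fun x : ℝ => ⌊x⌋₊) atTop atTop := tendsto_nat_floor_atTop
  have T1 : Tendsto (fun x : ℝ => ((((⌊x⌋₊:ℝ)/x : ℝ)):ℂ) *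
      (((⌊x⌋₊:ℝ)⁻¹ : ℝ) • ∑ i ∈ Finset.range ⌊x⌋₊, A i)) atTop (𝓝 0) := by
    have l1 : Tendsto (fun x : ℝ => ((((⌊x⌋₊:ℝ)/x : ℝ)):ℂ)) atTop (𝓝 1) := by
      have h2 := (Complex.continuous_ofReal.tendsto 1).comp (tendsto_nat_floor_div_atTop (R := ℝ))
      rw [Complex.ofReal_one] at h2
      exact h2.congr (fun x => rfl)
    have l2 : Tendsto (fun x : ℝ => ((⌊x⌋₊:ℝ)⁻¹ : ℝ) • ∑ i ∈ Finset.range ⌊x⌋₊, A i)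
        atTop (𝓝 0) := hces.comp hfloor
    simpa using l1.mul l2
  have T2 : Tendsto (fun x : ℝ => (1/(x:ℂ)) * ∫ t in ((⌊x⌋₊:ℝ))..x, g t) atTop (𝓝 0) := by
    apply squeeze_zero_norm' (a := fun x : ℝ => (2 * ‖γ‖) * x ^ (γ.re - 2))
    · filter_upwards [eventually_ge_atTop (1:ℝ)] with x hx
      set n : ℕ := ⌊x⌋₊ with hn
      have hx0 : (0:ℝ) < x := by linarith
      have hn1 : 1 ≤ n := Nat.le_floor (by exact_mod_cast hx)
      have hn1' : (1:ℝ) ≤ (n:ℝ) := by exact_mod_cast hn1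
      have hnx : (n:ℝ) ≤ x := Nat.floor_le hx0.le
      have hxlt : x < (n:ℝ) + 1 := Nat.lt_floor_add_one x
      have hIb : ‖∫ t in ((n:ℝ))..x, g t‖ ≤ (2 * ‖γ‖ * x ^ (γ.re - 1)) * |x - (n:ℝ)| := by
        apply intervalIntegral.norm_integral_le_of_norm_le_const
        intro t ht
        rw [Set.uIoc_of_le hnx] at ht
        have htn : (n:ℝ) ≤ t := le_of_lt ht.1
        have ht0 : (0:ℝ) < t := by linarith [ht.1]
        have hfl : ⌊t⌋ = (n:ℤ) := by
          rw [Int.floor_eq_iff]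
          exact ⟨by push_cast; linarith, by push_cast; linarith [ht.2]⟩
        have hgt : g t = ((t:ℂ)^γ - ((n:ℝ):ℂ)^γ) - (γ/2)*((n:ℝ):ℂ)^(γ-1) := by
          rw [hg]; simp only [hfl]; push_cast; ring
        rw [hgt]
        have e1 : ‖(t:ℂ)^γ - ((n:ℝ):ℂ)^γ‖ ≤ ‖γ‖ * x ^ (γ.re - 1) := by
          calc ‖(t:ℂ)^γ - ((n:ℝ):ℂ)^γ‖ ≤ ‖γ‖ * t ^ (γ.re - 1) * (t - (n:ℝ)) :=
              mvt1 h1 hn1' htn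
            _ ≤ ‖γ‖ * x ^ (γ.re - 1) * 1 := by
                have hts : t ^ (γ.re - 1) ≤ x ^ (γ.re - 1) :=
                  Real.rpow_le_rpow ht0.le ht.2 (by linarith)
                have htn1 : t - (n:ℝ) ≤ 1 := by linarith [ht.2]
                have h0 : (0:ℝ) ≤ ‖γ‖ := norm_nonneg _
                have h0' : (0:ℝ) ≤ t ^ (γ.re - 1) := Real.rpow_nonneg ht0.le _
                have h0'' : (0:ℝ) ≤ x ^ (γ.re - 1) := Real.rpow_nonneg hx0.le _
                have h0''' : (0:ℝ) ≤ t - (n:ℝ) := by linarith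
                exact mul_le_mul (mul_le_mul_of_nonneg_left hts h0) htn1 h0''' (by positivity)
            _ = ‖γ‖ * x ^ (γ.re - 1) := mul_one _
        have e2 : ‖(γ/2)*((n:ℝ):ℂ)^(γ-1)‖ ≤ ‖γ‖ * x ^ (γ.re - 1) := by
          rw [norm_mul, norm_cpow_real (by linarith : (0:ℝ) < (n:ℝ))]
          have hre : ((γ-1).re) = γ.re - 1 := by simp
          rw [hre]
          have hnn : (n:ℝ) ^ (γ.re - 1) ≤ x ^ (γ.re - 1) :=
            Real.rpow_le_rpow (by linarith) hnx (by linarith)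
          have hq : ‖γ/2‖ ≤ ‖γ‖ := by
            rw [norm_div]
            simp only [Complex.norm_ofNat]
            nlinarith [norm_nonneg γ]
          have h0 : (0:ℝ) ≤ (n:ℝ) ^ (γ.re - 1) := Real.rpow_nonneg (by linarith) _
          nlinarith [norm_nonneg (γ/2), Real.rpow_nonneg hx0.le (γ.re - 1)]
        calc ‖((t:ℂ)^γ - ((n:ℝ):ℂ)^γ) - (γ/2)*((n:ℝ):ℂ)^(γ-1)‖
            ≤ ‖(t:ℂ)^γ - ((n:ℝ):ℂ)^γ‖ + ‖(γ/2)*((n:ℝ):ℂ)^(γ-1)‖ := norm_sub_le _ _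
          _ ≤ 2 * ‖γ‖ * x ^ (γ.re - 1) := by linarith
      have hnorm1x : ‖(1/(x:ℂ))‖ = 1/x := by
        rw [norm_div, norm_one]
        simp [abs_of_pos hx0]
      rw [norm_mul, hnorm1x]
      have habs : |x - (n:ℝ)| ≤ 1 := by
        rw [abs_of_nonneg (by linarith)]; linarith
      have hxr : (1/x) * (2 * ‖γ‖ * x ^ (γ.re - 1)) = 2 * ‖γ‖ * x ^ (γ.re - 2) := by
        have : x ^ (γ.re - 2) = x ^ (γ.re - 1) / x := by
          rw [show γ.re - 2 = (γ.re - 1) - 1 by ring, Real.rpow_sub hx0, Real.rpow_one]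
        rw [this]; field_simp
      calc (1/x) * ‖∫ t in ((n:ℝ))..x, g t‖
          ≤ (1/x) * ((2 * ‖γ‖ * x ^ (γ.re - 1)) * |x - (n:ℝ)|) := by
            apply mul_le_mul_of_nonneg_left hIb (by positivity)
        _ ≤ (1/x) * (2 * ‖γ‖ * x ^ (γ.re - 1)) := by
            have h0 : (0:ℝ) ≤ 2 * ‖γ‖ * x ^ (γ.re - 1) := by positivity
            have := mul_le_mul_of_nonneg_left habs h0
            apply mul_le_mul_of_nonneg_left _ (by positivity : (0:ℝ) ≤ 1/x)
            nlinarith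
        _ = 2 * ‖γ‖ * x ^ (γ.re - 2) := hxr
    · simpa using hrpow.const_mul (2 * ‖γ‖)
  have final := T1.add T2
  rw [add_zero] at final
  apply final.congr'
  filter_upwards [eventually_ge_atTop (1:ℝ)] with x hx
  set n : ℕ := ⌊x⌋₊ with hn
  have hx0 : (0:ℝ) < x := by linarith
  have hn1 : 1 ≤ n := Nat.le_floor (by exact_mod_cast hx)
  have hn1' : (1:ℝ) ≤ (n:ℝ) := by exact_mod_cast hn1
  have hnx : (n:ℝ) ≤ x := Nat.floor_le hx0.le
  have hsplit : (∫ t in (0:ℝ)..x, g t)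
      = (∫ t in (0:ℝ)..((n:ℝ)), g t) + ∫ t in ((n:ℝ))..x, g t :=
    (intervalIntegral.integral_add_adjacent_intervals
      (g_intInt γ h1 le_rfl (by linarith))
      (g_intInt γ h1 (by linarith) hnx)).symm
  show ((((n:ℝ)/x : ℝ)):ℂ) * (((n:ℝ)⁻¹ : ℝ) • ∑ i ∈ Finset.range n, A i)
      + (1/(x:ℂ)) * (∫ t in ((n:ℝ))..x, g t) = cesaroP g x
  rw [hS n]
  simp only [cesaroP]
  rw [hsplit]
  set S := ∫ t in (0:ℝ)..((n:ℝ)), g t with hSdef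
  set R := ∫ t in ((n:ℝ))..x, g t with hRdef
  rw [Complex.real_smul]
  have hn0r : (n:ℝ) ≠ 0 := by linarith
  have key : ((((n:ℝ)/x : ℝ)):ℂ) * ((((n:ℝ)⁻¹ : ℝ)):ℂ) = 1/(x:ℂ) := by
    rw [← Complex.ofReal_mul]
    have hr : ((n:ℝ)/x) * ((n:ℝ))⁻¹ = 1/x := by field_simp
    rw [hr]
    push_cast
    ring
  calc ((((n:ℝ)/x : ℝ)):ℂ) * (((((n:ℝ)⁻¹ : ℝ)):ℂ) * S) + (1/(x:ℂ)) * R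
      = (((((n:ℝ)/x : ℝ)):ℂ) * ((((n:ℝ)⁻¹ : ℝ)):ℂ)) * S + (1/(x:ℂ)) * R := by ring
    _ = (1/(x:ℂ)) * S + (1/(x:ℂ)) * R := by rw [key]
    _ = (1/(x:ℂ)) * (S + R) := by ring
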